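/- Let X₀ ∈ ℝ^{n×n} be symmetric of rank r, let U ∈ ℝ^{n×r} have orthonormal columns spanning the column space of X₀, and set Π_{U⊥} = I − UUᵀ. Let Δ ∈ ℝ^{n×n} be symmetric with spectral norm ‖Δ‖ < σ_r(X₀) (σ_r(X₀) the r-th largest singular value of X₀), so that Uᵀ(X₀+Δ)U is invertible. Define the tangent-space projection Π_T(Δ) = Δ − Π_{U⊥} Δ Π_{U⊥} and the remainder R = Π_{U⊥} Δ U (Uᵀ(X₀+Δ)U)^{−1} Uᵀ Δᵀ Π_{U⊥}. Then ‖R‖_F ≤ ‖Π_T(Δ)‖_F² / (σ_r(X₀) − ‖Δ‖). -/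

import Mathlib

open Matrix BigOperators

/-- Frobenius norm of a real matrix. -/
noncomputable def frobNorm {a b : ℕ} (X : Matrix (Fin a) (Fin b) ℝ) : ℝ :=
  Real.sqrt (∑ i, ∑ j, (X i j) ^ 2)

/-- Spectral (operator) norm of a real matrix. -/
noncomputable def specNorm {a b : ℕ} (X : Matrix (Fin a) (Fin b) ℝ) : ℝ :=
  ‖LinearMap.toContinuousLinearMap (Matrix.toEuclideanLin X)‖

/-- `singVal X k`: the `k`-th largest singular value of `X` (1-indexed),
i.e. the `k`-th largest square root of an eigenvalue of `Xᴴ X`. -/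
noncomputable def singVal {a b : ℕ} (X : Matrix (Fin a) (Fin b) ℝ) (k : ℕ) : ℝ :=
  ((((Finset.univ : Finset (Fin b)).val.map
      (fun i => Real.sqrt ((show (Xᵀ * X).IsHermitian by simpa using Matrix.isHermitian_conjTranspose_mul_self X).eigenvalues i))).sort
      (· ≤ ·)).getD (b - k) 0)

/-- The positive semidefinite square root of a positive semidefinite matrix
(junk value `0` otherwise). -/
noncomputable def matSqrt {d : ℕ} (A : Matrix (Fin d) (Fin d) ℝ) : Matrix (Fin d) (Fin d) ℝ :=
  open scoped Classical in
  if h : A.PosSemidef then (h.1.eigenvectorUnitary.1 * diagonal ((↑) ∘ (Real.sqrt ·) ∘ h.1.eigenvalues) *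
      (star h.1.eigenvectorUnitary : Matrix (Fin d) (Fin d) ℝ)) else 0

/-- `Πₒ(X) = X (XᵀX)^{-1/2}`, the projection onto the nearest orthonormal-column matrix. -/
noncomputable def Pio {a b : ℕ} (X : Matrix (Fin a) (Fin b) ℝ) : Matrix (Fin a) (Fin b) ℝ :=
  X * (matSqrt (Xᵀ * X))⁻¹

/-! ### Auxiliary material -/

lemma Matrix.isHermitian_transpose_mul_self {a b : ℕ} (X : Matrix (Fin a) (Fin b) ℝ) :
    (Xᵀ * X).IsHermitian := by
  simpa using Matrix.isHermitian_conjTranspose_mul_self X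

/-- Euclidean norm of a plain vector. -/
noncomputable def evn {m : ℕ} (x : Fin m → ℝ) : ℝ := Real.sqrt (x ⬝ᵥ x)

lemma dot_self_nonneg {m : ℕ} (x : Fin m → ℝ) : 0 ≤ x ⬝ᵥ x :=
  Finset.sum_nonneg fun _ _ => mul_self_nonneg _

lemma evn_nonneg {m : ℕ} (x : Fin m → ℝ) : 0 ≤ evn x := Real.sqrt_nonneg _

lemma evn_zero {m : ℕ} : evn (0 : Fin m → ℝ) = 0 := by simp [evn, dotProduct]

lemma evn_eq_zero {m : ℕ} {v : Fin m → ℝ} (h : evn v = 0) : v = 0 := by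
  rw [evn, Real.sqrt_eq_zero (dot_self_nonneg v)] at h
  exact dotProduct_self_eq_zero.1 h

lemma real_le_of_sq_le_sq {x y : ℝ} (hx : 0 ≤ x) (hy : 0 ≤ y) (h : x ^ 2 ≤ y ^ 2) : x ≤ y := by
  have h2 := Real.sqrt_le_sqrt h
  rwa [Real.sqrt_sq hx, Real.sqrt_sq hy] at h2

section spec
open scoped Matrix.Norms.L2Operator

lemma evn_eq {m : ℕ} (x : Fin m → ℝ) :
    evn x = ‖(EuclideanSpace.equiv (Fin m) ℝ).symm x‖ := by
  rw [EuclideanSpace.norm_eq, evn, dotProduct]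
  congr 1
  exact Finset.sum_congr rfl fun i _ => by
    simp [Real.norm_eq_abs, sq_abs, pow_two, EuclideanSpace.equiv]

lemma specNorm_nonneg {a b : ℕ} (X : Matrix (Fin a) (Fin b) ℝ) : 0 ≤ specNorm X :=
  norm_nonneg (X : Matrix (Fin a) (Fin b) ℝ)

lemma specNorm_mulVec {a b : ℕ} (X : Matrix (Fin a) (Fin b) ℝ) (x : Fin b → ℝ) :
    evn (X *ᵥ x) ≤ specNorm X * evn x := by
  rw [evn_eq, evn_eq]
  exact X.l2_opNorm_mulVec _

lemma specNorm_le_bound {a b : ℕ} (X : Matrix (Fin a) (Fin b) ℝ) (c : ℝ) (hc : 0 ≤ c)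
    (h : ∀ x, evn (X *ᵥ x) ≤ c * evn x) : specNorm X ≤ c := by
  rw [show specNorm X = ‖X‖ from rfl, l2_opNorm_def]
  refine ContinuousLinearMap.opNorm_le_bound _ hc fun x => ?_
  have hx := h ((EuclideanSpace.equiv (Fin b) ℝ) x)
  rw [evn_eq, evn_eq] at hx
  convert hx using 3 <;> rfl

lemma specNorm_mul_le {a b c : ℕ} (X : Matrix (Fin a) (Fin b) ℝ) (Y : Matrix (Fin b) (Fin c) ℝ) :
    specNorm (X * Y) ≤ specNorm X * specNorm Y := X.l2_opNorm_mul Y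

lemma specNorm_transpose {a b : ℕ} (X : Matrix (Fin a) (Fin b) ℝ) :
    specNorm Xᵀ = specNorm X := by
  have h : Xᴴ = Xᵀ := by ext i j; simp [conjTranspose]
  rw [← h]
  exact X.l2_opNorm_conjTranspose

lemma specNorm_transpose_mul_self {a b : ℕ} (X : Matrix (Fin a) (Fin b) ℝ) :
    specNorm (Xᵀ * X) = specNorm X * specNorm X := by
  have h : Xᴴ = Xᵀ := by ext i j; simp [conjTranspose]
  rw [← h]
  exact X.l2_opNorm_conjTranspose_mul_self

lemma evn_add_ge {m : ℕ} (a b : Fin m → ℝ) : evn a - evn b ≤ evn (a + b) := by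
  rw [evn_eq a, evn_eq b, evn_eq (a + b)]
  have hadd : (EuclideanSpace.equiv (Fin m) ℝ).symm (a + b)
      = (EuclideanSpace.equiv (Fin m) ℝ).symm a + (EuclideanSpace.equiv (Fin m) ℝ).symm b :=
    map_add _ a b
  rw [hadd]
  have h := norm_sub_le (((EuclideanSpace.equiv (Fin m) ℝ).symm a)
    + ((EuclideanSpace.equiv (Fin m) ℝ).symm b)) ((EuclideanSpace.equiv (Fin m) ℝ).symm b)
  rw [add_sub_cancel_right] at h
  linarith

end spec

section frob
attribute [local instance] Matrix.frobeniusSeminormedAddCommGroup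

lemma frobNorm_eq {a b : ℕ} (X : Matrix (Fin a) (Fin b) ℝ) : frobNorm X = ‖X‖ := by
  rw [frobenius_norm_def, frobNorm, Real.sqrt_eq_rpow]
  congr 1
  exact Finset.sum_congr rfl fun i _ => Finset.sum_congr rfl fun j _ => by
    rw [Real.norm_eq_abs, Real.rpow_two, sq_abs]

lemma frobNorm_transpose {a b : ℕ} (X : Matrix (Fin a) (Fin b) ℝ) :
    frobNorm Xᵀ = frobNorm X := by
  rw [frobNorm_eq, frobNorm_eq]; exact frobenius_norm_transpose X

end frob

lemma frobNorm_nonneg {a b : ℕ} (X : Matrix (Fin a) (Fin b) ℝ) : 0 ≤ frobNorm X :=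
  Real.sqrt_nonneg _

lemma frob_sq_cols {a b : ℕ} (X : Matrix (Fin a) (Fin b) ℝ) :
    frobNorm X ^ 2 = ∑ j, (fun i => X i j) ⬝ᵥ (fun i => X i j) := by
  rw [frobNorm, Real.sq_sqrt (Finset.sum_nonneg fun i _ =>
    Finset.sum_nonneg fun j _ => sq_nonneg (X i j)), Finset.sum_comm]
  simp [dotProduct, pow_two]

lemma col_mul {a b c : ℕ} (A : Matrix (Fin a) (Fin b) ℝ) (B : Matrix (Fin b) (Fin c) ℝ)
    (j : Fin c) : (fun i => (A * B) i j) = A *ᵥ (fun k => B k j) := by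
  ext i; simp [Matrix.mul_apply, Matrix.mulVec, dotProduct]

lemma evn_sq {m : ℕ} (x : Fin m → ℝ) : evn x ^ 2 = x ⬝ᵥ x :=
  Real.sq_sqrt (dot_self_nonneg x)

lemma frobNorm_mul_le_left {a b c : ℕ} (A : Matrix (Fin a) (Fin b) ℝ)
    (B : Matrix (Fin b) (Fin c) ℝ) : frobNorm (A * B) ≤ specNorm A * frobNorm B := by
  have hs : frobNorm (A * B) ^ 2 ≤ (specNorm A * frobNorm B) ^ 2 := by
    rw [frob_sq_cols, mul_pow, frob_sq_cols, Finset.mul_sum]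
    refine Finset.sum_le_sum fun j _ => ?_
    rw [col_mul, ← evn_sq, ← evn_sq]
    calc evn (A *ᵥ fun k => B k j) ^ 2 ≤ (specNorm A * evn fun k => B k j) ^ 2 :=
          pow_le_pow_left₀ (evn_nonneg _) (specNorm_mulVec A _) 2
      _ = specNorm A ^ 2 * evn (fun k => B k j) ^ 2 := by ring
  exact real_le_of_sq_le_sq (frobNorm_nonneg _)
    (mul_nonneg (specNorm_nonneg _) (frobNorm_nonneg _)) hs

lemma frobNorm_mul_le_right {a b c : ℕ} (A : Matrix (Fin a) (Fin b) ℝ)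
    (B : Matrix (Fin b) (Fin c) ℝ) : frobNorm (A * B) ≤ frobNorm A * specNorm B := by
  calc frobNorm (A * B) = frobNorm ((A * B)ᵀ) := (frobNorm_transpose _).symm
    _ = frobNorm (Bᵀ * Aᵀ) := by rw [Matrix.transpose_mul]
    _ ≤ specNorm Bᵀ * frobNorm Aᵀ := frobNorm_mul_le_left _ _
    _ = frobNorm A * specNorm B := by
        rw [specNorm_transpose, frobNorm_transpose]; ring

lemma spec_le_frob {a b : ℕ} (X : Matrix (Fin a) (Fin b) ℝ) : specNorm X ≤ frobNorm X := by
  refine specNorm_le_bound X _ (frobNorm_nonneg X) fun v => ?_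
  have hb : (X *ᵥ v) ⬝ᵥ (X *ᵥ v) ≤ (∑ i, ∑ j, X i j ^ 2) * (v ⬝ᵥ v) := by
    simp only [dotProduct]
    rw [Finset.sum_mul]
    refine Finset.sum_le_sum fun i _ => ?_
    have hcs := Finset.sum_mul_sq_le_sq_mul_sq Finset.univ (fun j => X i j) v
    have hv2 : (∑ j, v j ^ 2) = ∑ j, v j * v j := Finset.sum_congr rfl fun j _ => (pow_two _)
    calc (X *ᵥ v) i * (X *ᵥ v) i = (∑ j, X i j * v j) ^ 2 := by
          simp [Matrix.mulVec, dotProduct, pow_two]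
      _ ≤ (∑ j, X i j ^ 2) * (∑ j, v j ^ 2) := hcs
      _ = (∑ j, X i j ^ 2) * (∑ j, v j * v j) := by rw [hv2]
  calc evn (X *ᵥ v) = Real.sqrt ((X *ᵥ v) ⬝ᵥ (X *ᵥ v)) := rfl
    _ ≤ Real.sqrt ((∑ i, ∑ j, X i j ^ 2) * (v ⬝ᵥ v)) := Real.sqrt_le_sqrt hb
    _ = frobNorm X * evn v := by
        rw [Real.sqrt_mul (Finset.sum_nonneg fun i _ =>
          Finset.sum_nonneg fun j _ => sq_nonneg (X i j))]
        rfl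

lemma spec_orth {n r : ℕ} (U : Matrix (Fin n) (Fin r) ℝ) (hUo : Uᵀ * U = 1) :
    specNorm U ≤ 1 := by
  have h := specNorm_transpose_mul_self U
  rw [hUo] at h
  have hone : specNorm (1 : Matrix (Fin r) (Fin r) ℝ) ≤ 1 :=
    specNorm_le_bound _ 1 zero_le_one fun x => by rw [Matrix.one_mulVec, one_mul]
  nlinarith [specNorm_nonneg U]

lemma spec_proj {n : ℕ} (Q : Matrix (Fin n) (Fin n) ℝ) (hQt : Qᵀ = Q) (hQQ : Q * Q = Q) :
    specNorm Q ≤ 1 := by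
  have h := specNorm_transpose_mul_self Q
  rw [hQt, hQQ] at h
  by_contra hgt
  push_neg at hgt
  nlinarith [specNorm_nonneg Q]

/-! ### Sorted-list combinatorics for singular values -/

lemma sorted_getD_le {l : List ℝ} (hs : l.Pairwise (· ≤ ·)) {k : ℕ} (hk : k < l.length)
    (p : ℝ) (hc : k + 1 ≤ l.countP (fun x => decide (x ≤ p))) : l.getD k 0 ≤ p := by
  rw [List.getD_eq_getElem l 0 hk]
  by_contra hlt
  push_neg at hlt
  have hdrop : ∀ x ∈ l.drop k, ¬ (x ≤ p) := by
    intro x hx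
    obtain ⟨m, hm, rfl⟩ := List.mem_iff_getElem.1 hx
    rw [List.getElem_drop]
    have hkm : k + m < l.length := by
      have := List.length_drop (i := k) (l := l) ▸ hm; omega
    have hle : l[k] ≤ l[k + m] := by
      have := hs.rel_get_of_le (a := ⟨k, hk⟩) (b := ⟨k + m, hkm⟩)
        (Fin.mk_le_mk.mpr (Nat.le_add_right k m))
      simpa using this
    intro hxp
    exact absurd (le_trans hle hxp) (not_le.2 hlt)
  have h1 : l.length - k ≤ l.countP (fun x => decide (¬ x ≤ p)) := by
    have hsub : List.Sublist (l.drop k) l := List.drop_sublist k l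
    have h := hsub.countP_le (p := fun x => decide (¬ x ≤ p))
    have hall : (l.drop k).countP (fun x => decide (¬ x ≤ p)) = (l.drop k).length :=
      List.countP_eq_length.2 (by intro a ha; simpa using hdrop a ha)
    rw [hall, List.length_drop] at h
    exact h
  have h2 := List.length_eq_countP_add_countP (p := fun x => decide (x ≤ p)) (l := l)
  simp only [decide_not, Bool.decide_coe] at h1 h2 ⊢
  omega

lemma getD_nonneg {l : List ℝ} (h : ∀ x ∈ l, 0 ≤ x) (k : ℕ) : 0 ≤ l.getD k 0 := by
  by_cases hk : k < l.length
  · rw [List.getD_eq_getElem l 0 hk]; exact h _ (List.getElem_mem hk)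
  · rw [List.getD_eq_default l 0 (not_lt.1 hk)]

section sv
variable {n : ℕ} (X₀ : Matrix (Fin n) (Fin n) ℝ)

lemma singVal_nonneg (k : ℕ) : 0 ≤ singVal X₀ k := by
  refine getD_nonneg (fun x hx => ?_) _
  rw [Multiset.mem_sort] at hx
  obtain ⟨i, _, rfl⟩ := Multiset.mem_map.1 hx
  exact Real.sqrt_nonneg _

lemma singVal_zero : singVal X₀ 0 = 0 := by
  unfold singVal
  apply List.getD_eq_default
  rw [Multiset.length_sort, Multiset.card_map]
  simp

lemma singVal_le_sqrt_eig (r : ℕ) (hrank : X₀.rank = r) (hr1 : 1 ≤ r) (i : Fin n)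
    (hi : (Matrix.isHermitian_transpose_mul_self X₀).eigenvalues i ≠ 0) :
    singVal X₀ r ≤ Real.sqrt ((Matrix.isHermitian_transpose_mul_self X₀).eigenvalues i) := by
  classical
  set μ : Fin n → ℝ := fun j =>
    Real.sqrt ((Matrix.isHermitian_transpose_mul_self X₀).eigenvalues j) with hμ
  have hrn : r ≤ n := by
    have := Matrix.rank_le_card_width X₀; rw [hrank] at this; simpa using this
  have hcard_nz : (Finset.univ.filter
      (fun a : Fin n => (Matrix.isHermitian_transpose_mul_self X₀).eigenvalues a ≠ 0)).card
      = r := by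
    have h1 : (X₀ᴴ * X₀).rank = r := by
      rw [Matrix.conjTranspose_eq_transpose_of_trivial, Matrix.rank_transpose_mul_self, hrank]
    have h2 := (Matrix.isHermitian_transpose_mul_self X₀).rank_eq_card_non_zero_eigs
    rw [Matrix.conjTranspose_eq_transpose_of_trivial] at h1
    rw [h1, Fintype.card_subtype] at h2
    exact h2.symm
  have hcard_z : (Finset.univ.filter
      (fun a : Fin n => (Matrix.isHermitian_transpose_mul_self X₀).eigenvalues a = 0)).card
      = n - r := by
    have := Finset.card_filter_add_card_filter_not
      (s := (Finset.univ : Finset (Fin n)))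
      (p := fun a : Fin n => (Matrix.isHermitian_transpose_mul_self X₀).eigenvalues a ≠ 0)
    simp only [not_not] at this
    rw [hcard_nz] at this
    simp only [Finset.card_univ, Fintype.card_fin] at this
    omega
  have hF : n - r + 1 ≤ (Finset.univ.filter (fun a : Fin n => μ a ≤ μ i)).card := by
    have hsub : insert i (Finset.univ.filter
        (fun a : Fin n => (Matrix.isHermitian_transpose_mul_self X₀).eigenvalues a = 0))
        ⊆ Finset.univ.filter (fun a : Fin n => μ a ≤ μ i) := by
      intro a ha
      rcases Finset.mem_insert.1 ha with rfl | ha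
      · simp
      · have h0 : (Matrix.isHermitian_transpose_mul_self X₀).eigenvalues a = 0 :=
          (Finset.mem_filter.1 ha).2
        simp only [Finset.mem_filter, Finset.mem_univ, true_and, hμ, h0, Real.sqrt_zero]
        exact Real.sqrt_nonneg _
    have hnotin : i ∉ (Finset.univ.filter
        (fun a : Fin n => (Matrix.isHermitian_transpose_mul_self X₀).eigenvalues a = 0)) := by
      simp [hi]
    have := Finset.card_le_card hsub
    rw [Finset.card_insert_of_notMem hnotin, hcard_z] at this
    omega
  have hcount : (((Finset.univ : Finset (Fin n)).val.map μ).sort (· ≤ ·)).countP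
      (fun x => decide (x ≤ μ i))
      = (Finset.univ.filter (fun a : Fin n => μ a ≤ μ i)).card := by
    rw [← Multiset.coe_countP, Multiset.sort_eq, Multiset.countP_map]
    rfl
  have hlen : (((Finset.univ : Finset (Fin n)).val.map μ).sort (· ≤ ·)).length = n := by
    rw [Multiset.length_sort, Multiset.card_map]; simp
  exact sorted_getD_le (Multiset.pairwise_sort _ _) (k := n - r)
    (by omega : n - r < (((Finset.univ : Finset (Fin n)).val.map μ).sort (· ≤ ·)).length)
    (μ i) (by rw [hcount]; omega)
end sv

/-! ### Spectral decomposition facts -/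

lemma dot_mulVec_self {a b : ℕ} (X : Matrix (Fin a) (Fin b) ℝ) (v : Fin b → ℝ) :
    (X *ᵥ v) ⬝ᵥ (X *ᵥ v) = v ⬝ᵥ ((Xᵀ * X) *ᵥ v) := by
  rw [← Matrix.mulVec_mulVec, Matrix.dotProduct_mulVec v Xᵀ, Matrix.vecMul_transpose]

section eigsec
variable {n : ℕ} (X₀ : Matrix (Fin n) (Fin n) ℝ)

local notation "hH" => Matrix.isHermitian_transpose_mul_self X₀
local notation "V" => ((Matrix.IsHermitian.eigenvectorUnitary hH : Matrix (Fin n) (Fin n) ℝ))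
local notation "eig" => Matrix.IsHermitian.eigenvalues hH

lemma star_V : star V = Vᵀ := by
  rw [Matrix.star_eq_conjTranspose, Matrix.conjTranspose_eq_transpose_of_trivial]

lemma V_mul_Vt : V * Vᵀ = 1 := by
  rw [← star_V X₀]
  exact (Unitary.mem_iff.mp (Matrix.IsHermitian.eigenvectorUnitary hH).prop).2

lemma Vt_mul_V : Vᵀ * V = 1 := by
  rw [← star_V X₀]
  exact (Unitary.mem_iff.mp (Matrix.IsHermitian.eigenvectorUnitary hH).prop).1

lemma spec_thm : X₀ᵀ * X₀ = V * Matrix.diagonal eig * Vᵀ := by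
  have h := Matrix.IsHermitian.spectral_theorem hH
  rw [Unitary.conjStarAlgAut_apply, star_V X₀] at h
  exact h

lemma diag_mulVec (d : Fin n → ℝ) (v : Fin n → ℝ) :
    Matrix.diagonal d *ᵥ v = fun i => d i * v i := by
  ext i
  simp [Matrix.mulVec, Matrix.diagonal, dotProduct, Finset.sum_ite_eq, ite_mul]

lemma col_V_eq (i : Fin n) : (fun j => V j i) = V *ᵥ Pi.single i 1 := by
  ext j
  simp [Matrix.mulVec, dotProduct, Pi.single_apply, mul_ite]

lemma X0_col_V_zero (i : Fin n) (hi : eig i = 0) : X₀ *ᵥ (fun j => V j i) = 0 := by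
  have h1 : (X₀ *ᵥ (fun j => V j i)) ⬝ᵥ (X₀ *ᵥ (fun j => V j i)) = 0 := by
    rw [dot_mulVec_self, show (X₀ᵀ * X₀) *ᵥ (fun j => V j i)
      = (V * Matrix.diagonal eig * Vᵀ) *ᵥ (fun j => V j i) from congrArg (· *ᵥ _) (spec_thm X₀)]
    rw [col_V_eq X₀ i, Matrix.mulVec_mulVec, Matrix.mul_assoc (V * Matrix.diagonal eig) _ _,
      Vt_mul_V X₀, Matrix.mul_one, ← Matrix.mulVec_mulVec]
    rw [Matrix.diagonal_mulVec_single]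
    rw [show eig i * 1 = 0 by rw [hi]; ring]
    simp
  exact dotProduct_self_eq_zero.1 h1

variable (hX₀symm : X₀ᵀ = X₀)

include hX₀symm in
lemma lb_on_range (σ : ℝ) (hσ : 0 ≤ σ)
    (hσle : ∀ i, eig i ≠ 0 → σ ^ 2 ≤ eig i)
    (x : Fin n → ℝ) (hx : x ∈ LinearMap.range X₀.mulVecLin) :
    σ * evn x ≤ evn (X₀ *ᵥ x) := by
  classical
  obtain ⟨y, hy⟩ := hx
  have hy' : x = X₀ *ᵥ y := by rw [← hy, Matrix.mulVecLin_apply]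
  set c : Fin n → ℝ := Vᵀ *ᵥ x with hc
  have h1 : (X₀ *ᵥ x) ⬝ᵥ (X₀ *ᵥ x) = ∑ i, eig i * (c i) ^ 2 := by
    rw [dot_mulVec_self, show (X₀ᵀ * X₀) *ᵥ x
      = (V * Matrix.diagonal eig * Vᵀ) *ᵥ x from congrArg (· *ᵥ x) (spec_thm X₀)]
    rw [Matrix.mul_assoc, ← Matrix.mulVec_mulVec,
      ← Matrix.mulVec_mulVec, Matrix.dotProduct_mulVec x V, ← Matrix.mulVec_transpose, ← hc,
      diag_mulVec]
    simp only [dotProduct]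
    exact Finset.sum_congr rfl fun i _ => by ring
  have h2 : c ⬝ᵥ c = x ⬝ᵥ x := by
    rw [hc, dot_mulVec_self Vᵀ x, Matrix.transpose_transpose, V_mul_Vt X₀, Matrix.one_mulVec]
  have h3 : ∀ i, eig i = 0 → c i = 0 := by
    intro i hi
    have hci : c i = (fun j => V j i) ⬝ᵥ (X₀ *ᵥ y) := by
      rw [hc, hy']
      simp [Matrix.mulVec, dotProduct, Matrix.transpose_apply]
    rw [hci, Matrix.dotProduct_mulVec, ← Matrix.mulVec_transpose]
    rw [show X₀ᵀ *ᵥ (fun j => V j i) = X₀ *ᵥ (fun j => V j i) from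
      congrArg (· *ᵥ _) hX₀symm, X0_col_V_zero X₀ i hi]
    simp
  have h4 : σ ^ 2 * (x ⬝ᵥ x) ≤ (X₀ *ᵥ x) ⬝ᵥ (X₀ *ᵥ x) := by
    rw [h1, ← h2, dotProduct, Finset.mul_sum]
    refine Finset.sum_le_sum fun i _ => ?_
    by_cases hi : eig i = 0
    · simp [h3 i hi, hi]
    · have := hσle i hi; nlinarith [sq_nonneg (c i), mul_self_nonneg (c i)]
  calc σ * evn x = Real.sqrt (σ ^ 2 * (x ⬝ᵥ x)) := by
        rw [Real.sqrt_mul (sq_nonneg σ), Real.sqrt_sq hσ]; rfl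
    _ ≤ Real.sqrt ((X₀ *ᵥ x) ⬝ᵥ (X₀ *ᵥ x)) := Real.sqrt_le_sqrt h4
    _ = evn (X₀ *ᵥ x) := rfl
end eigsec

/-! ### Projection and invertibility -/

lemma proj_fix {n r : ℕ} (U : Matrix (Fin n) (Fin r) ℝ) (hUo : Uᵀ * U = 1) :
    ∀ x ∈ Submodule.span ℝ (Set.range fun k => Uᵀ k), (U * Uᵀ) *ᵥ x = x := by
  intro x hx
  induction hx using Submodule.span_induction with
  | mem y hy =>
    obtain ⟨k, rfl⟩ := hy
    have hcol : Uᵀ k = U *ᵥ Pi.single k 1 := by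
      ext j; simp [Matrix.mulVec, dotProduct, Pi.single_apply, mul_ite]
    show (U * Uᵀ) *ᵥ Uᵀ k = Uᵀ k
    rw [hcol, Matrix.mulVec_mulVec, Matrix.mul_assoc, hUo, Matrix.mul_one]
  | zero => exact Matrix.mulVec_zero _
  | add y z _ _ hy hz => rw [Matrix.mulVec_add, hy, hz]
  | smul a y _ hy => rw [Matrix.mulVec_smul, hy]

lemma proj_left {n r : ℕ} (X₀ : Matrix (Fin n) (Fin n) ℝ) (U : Matrix (Fin n) (Fin r) ℝ)
    (hUo : Uᵀ * U = 1)
    (hUspan : Submodule.span ℝ (Set.range fun k => Uᵀ k) =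
      Submodule.span ℝ (Set.range fun j => X₀ᵀ j)) :
    (U * Uᵀ) * X₀ = X₀ := by
  ext i j
  have hmem : X₀ᵀ j ∈ Submodule.span ℝ (Set.range fun k => Uᵀ k) := by
    rw [hUspan]; exact Submodule.subset_span ⟨j, rfl⟩
  have h := congrFun (proj_fix U hUo (X₀ᵀ j) hmem) i
  simpa [Matrix.mulVec, dotProduct, Matrix.mul_apply, Matrix.transpose_apply] using h

lemma inv_bound {d : ℕ} (M : Matrix (Fin d) (Fin d) ℝ) (s : ℝ) (hs : 0 < s)
    (hlb : ∀ v, s * evn v ≤ evn (M *ᵥ v)) : IsUnit M ∧ specNorm M⁻¹ ≤ s⁻¹ := by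
  have hdet : IsUnit M.det := by
    rw [isUnit_iff_ne_zero]
    intro h0
    obtain ⟨v, hv, hv0⟩ := (Matrix.exists_mulVec_eq_zero_iff).2 h0
    apply hv
    have hb := hlb v
    rw [hv0, evn_zero] at hb
    have hevn : evn v ≤ 0 := by nlinarith [evn_nonneg v]
    exact evn_eq_zero (le_antisymm hevn (evn_nonneg v))
  refine ⟨(Matrix.isUnit_iff_isUnit_det M).2 hdet, ?_⟩
  refine specNorm_le_bound _ _ (inv_nonneg.2 hs.le) fun w => ?_
  have h := hlb (M⁻¹ *ᵥ w)
  rw [Matrix.mulVec_mulVec, Matrix.mul_nonsing_inv M hdet, Matrix.one_mulVec] at h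
  have h2 := mul_le_mul_of_nonneg_left h (inv_nonneg.2 hs.le)
  rwa [← mul_assoc, inv_mul_cancel₀ hs.ne', one_mul] at h2

/-- Bound on the remainder of the tangent-space projection for the
manifold of rank-`r` matrices. -/
theorem stmt12 {n r : ℕ} (X₀ : Matrix (Fin n) (Fin n) ℝ) (hX₀symm : X₀ᵀ = X₀)
    (hrank : X₀.rank = r)
    (U : Matrix (Fin n) (Fin r) ℝ) (hUo : Uᵀ * U = 1)
    (hUspan : Submodule.span ℝ (Set.range fun k => Uᵀ k) =
      Submodule.span ℝ (Set.range fun j => X₀ᵀ j))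
    (Δ : Matrix (Fin n) (Fin n) ℝ) (hΔsymm : Δᵀ = Δ)
    (hsmall : specNorm Δ < singVal X₀ r) :
    IsUnit (Uᵀ * (X₀ + Δ) * U) ∧
      frobNorm ((1 - U * Uᵀ) * Δ * U * (Uᵀ * (X₀ + Δ) * U)⁻¹ * Uᵀ * Δᵀ * (1 - U * Uᵀ)) ≤
        (frobNorm (Δ - (1 - U * Uᵀ) * Δ * (1 - U * Uᵀ))) ^ 2 /
          (singVal X₀ r - specNorm Δ) := by
  classical
  have hσpos : 0 < singVal X₀ r := lt_of_le_of_lt (specNorm_nonneg Δ) hsmall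
  have hr1 : 1 ≤ r := by
    rcases Nat.eq_zero_or_pos r with rfl | h
    · rw [singVal_zero] at hσpos; exact absurd hσpos (lt_irrefl 0)
    · exact h
  set σ := singVal X₀ r with hσdef
  set e := specNorm Δ with hedef
  have hse : 0 < σ - e := sub_pos.2 hsmall
  have hσ2le : ∀ i, (Matrix.isHermitian_transpose_mul_self X₀).eigenvalues i ≠ 0 →
      σ ^ 2 ≤ (Matrix.isHermitian_transpose_mul_self X₀).eigenvalues i := by
    intro i hi
    have h1 := singVal_le_sqrt_eig X₀ r hrank hr1 i hi
    have h2 : σ ^ 2 ≤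
        Real.sqrt ((Matrix.isHermitian_transpose_mul_self X₀).eigenvalues i) ^ 2 :=
      pow_le_pow_left₀ hσpos.le h1 2
    rwa [Real.sq_sqrt (show 0 ≤ (Matrix.isHermitian_transpose_mul_self X₀).eigenvalues i from
      Matrix.eigenvalues_conjTranspose_mul_self_nonneg X₀ i)] at h2
  set Q : Matrix (Fin n) (Fin n) ℝ := 1 - U * Uᵀ with hQ
  have hQU : Q * U = 0 := by
    rw [hQ, Matrix.sub_mul, Matrix.one_mul, Matrix.mul_assoc, hUo, Matrix.mul_one, sub_self]
  have hQt : Qᵀ = Q := by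
    rw [hQ, Matrix.transpose_sub, Matrix.transpose_one, Matrix.transpose_mul,
      Matrix.transpose_transpose]
  have hQQ : Q * Q = Q := by
    have hPP : (U * Uᵀ) * (U * Uᵀ) = U * Uᵀ := by
      rw [Matrix.mul_assoc U Uᵀ (U * Uᵀ), ← Matrix.mul_assoc Uᵀ U Uᵀ, hUo, Matrix.one_mul]
    have hexpand : (1 - U * Uᵀ) * (1 - U * Uᵀ)
        = 1 - U * Uᵀ - U * Uᵀ + (U * Uᵀ) * (U * Uᵀ) := by noncomm_ring
    rw [hQ, hexpand, hPP]
    abel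
  have hUUX : (U * Uᵀ) * X₀ = X₀ := proj_left X₀ U hUo hUspan
  have hXU_eq : X₀ * U = U * (Uᵀ * X₀ * U) := by
    calc X₀ * U = ((U * Uᵀ) * X₀) * U := by rw [hUUX]
      _ = U * (Uᵀ * X₀ * U) := by
          rw [Matrix.mul_assoc U Uᵀ X₀, Matrix.mul_assoc U (Uᵀ * X₀) U]
  have hUiso : ∀ v : Fin r → ℝ, evn (U *ᵥ v) = evn v := by
    intro v; rw [evn, evn, dot_mulVec_self, hUo, Matrix.one_mulVec]
  have hS_lb : ∀ v : Fin r → ℝ, σ * evn v ≤ evn ((Uᵀ * X₀ * U) *ᵥ v) := by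
    intro v
    have hxmem : U *ᵥ v ∈ LinearMap.range X₀.mulVecLin := by
      rw [Matrix.range_mulVecLin, show Set.range X₀.col = Set.range fun j => X₀ᵀ j from rfl,
        ← hUspan, show (Set.range fun k => Uᵀ k) = Set.range U.col from rfl,
        ← Matrix.range_mulVecLin]
      exact ⟨v, rfl⟩
    have hlb := lb_on_range X₀ hX₀symm σ hσpos.le hσ2le (U *ᵥ v) hxmem
    rw [hUiso v, Matrix.mulVec_mulVec, hXU_eq, ← Matrix.mulVec_mulVec] at hlb
    rwa [hUiso _] at hlb
  have hUspec : specNorm U ≤ 1 := spec_orth U hUo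
  have hUtspec : specNorm Uᵀ ≤ 1 := by rw [specNorm_transpose]; exact hUspec
  have hE_ub : ∀ v : Fin r → ℝ, evn ((Uᵀ * Δ * U) *ᵥ v) ≤ e * evn v := by
    intro v
    rw [← Matrix.mulVec_mulVec, ← Matrix.mulVec_mulVec]
    calc evn (Uᵀ *ᵥ (Δ *ᵥ (U *ᵥ v))) ≤ specNorm Uᵀ * evn (Δ *ᵥ (U *ᵥ v)) :=
          specNorm_mulVec _ _
      _ ≤ 1 * evn (Δ *ᵥ (U *ᵥ v)) := mul_le_mul_of_nonneg_right hUtspec (evn_nonneg _)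
      _ = evn (Δ *ᵥ (U *ᵥ v)) := one_mul _
      _ ≤ e * evn (U *ᵥ v) := specNorm_mulVec _ _
      _ = e * evn v := by rw [hUiso]
  have hM_eq : Uᵀ * (X₀ + Δ) * U = Uᵀ * X₀ * U + Uᵀ * Δ * U := by
    rw [Matrix.mul_add, Matrix.add_mul]
  have hM_lb : ∀ v, (σ - e) * evn v ≤ evn ((Uᵀ * (X₀ + Δ) * U) *ᵥ v) := by
    intro v
    rw [hM_eq, Matrix.add_mulVec]
    have ht := evn_add_ge ((Uᵀ * X₀ * U) *ᵥ v) ((Uᵀ * Δ * U) *ᵥ v)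
    have h1 := hS_lb v
    have h2 := hE_ub v
    have hexp : (σ - e) * evn v = σ * evn v - e * evn v := by ring
    rw [hexp]
    linarith
  obtain ⟨hunit, hinv⟩ := inv_bound (Uᵀ * (X₀ + Δ) * U) (σ - e) hse hM_lb
  refine ⟨hunit, ?_⟩
  have hA : Q * (Δ - Q * Δ * Q) * U = Q * Δ * U := by
    simp only [Matrix.mul_sub, Matrix.sub_mul, Matrix.mul_assoc, hQU, Matrix.mul_zero,
      sub_zero]
  have hAT : (Q * Δ * U)ᵀ = Uᵀ * Δᵀ * Q := by
    rw [Matrix.transpose_mul, Matrix.transpose_mul, hQt, ← Matrix.mul_assoc]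
  have hexpr : Q * Δ * U * (Uᵀ * (X₀ + Δ) * U)⁻¹ * Uᵀ * Δᵀ * Q
      = (Q * Δ * U) * ((Uᵀ * (X₀ + Δ) * U)⁻¹ * (Q * Δ * U)ᵀ) := by
    rw [hAT]; simp only [Matrix.mul_assoc]
  rw [hexpr]
  have hfa : frobNorm (Q * Δ * U) ≤ frobNorm (Δ - Q * Δ * Q) := by
    rw [← hA]
    calc frobNorm (Q * (Δ - Q * Δ * Q) * U)
        = frobNorm (Q * ((Δ - Q * Δ * Q) * U)) := by rw [Matrix.mul_assoc]
      _ ≤ specNorm Q * frobNorm ((Δ - Q * Δ * Q) * U) := frobNorm_mul_le_left _ _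
      _ ≤ 1 * frobNorm ((Δ - Q * Δ * Q) * U) :=
          mul_le_mul_of_nonneg_right (spec_proj Q hQt hQQ) (frobNorm_nonneg _)
      _ = frobNorm ((Δ - Q * Δ * Q) * U) := one_mul _
      _ ≤ frobNorm (Δ - Q * Δ * Q) * specNorm U := frobNorm_mul_le_right _ _
      _ ≤ frobNorm (Δ - Q * Δ * Q) * 1 :=
          mul_le_mul_of_nonneg_left hUspec (frobNorm_nonneg _)
      _ = frobNorm (Δ - Q * Δ * Q) := mul_one _
  have hstep : frobNorm ((Q * Δ * U) * ((Uᵀ * (X₀ + Δ) * U)⁻¹ * (Q * Δ * U)ᵀ))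
      ≤ frobNorm (Q * Δ * U) * (specNorm (Uᵀ * (X₀ + Δ) * U)⁻¹ * frobNorm (Q * Δ * U)) := by
    calc frobNorm ((Q * Δ * U) * ((Uᵀ * (X₀ + Δ) * U)⁻¹ * (Q * Δ * U)ᵀ))
        ≤ frobNorm (Q * Δ * U) * specNorm ((Uᵀ * (X₀ + Δ) * U)⁻¹ * (Q * Δ * U)ᵀ) :=
          frobNorm_mul_le_right _ _
      _ ≤ frobNorm (Q * Δ * U) *
            (specNorm (Uᵀ * (X₀ + Δ) * U)⁻¹ * specNorm (Q * Δ * U)ᵀ) :=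
          mul_le_mul_of_nonneg_left (specNorm_mul_le _ _) (frobNorm_nonneg _)
      _ ≤ frobNorm (Q * Δ * U) *
            (specNorm (Uᵀ * (X₀ + Δ) * U)⁻¹ * frobNorm (Q * Δ * U)ᵀ) := by
          refine mul_le_mul_of_nonneg_left ?_ (frobNorm_nonneg _)
          exact mul_le_mul_of_nonneg_left (spec_le_frob _)
            (specNorm_nonneg _)
      _ = frobNorm (Q * Δ * U) *
            (specNorm (Uᵀ * (X₀ + Δ) * U)⁻¹ * frobNorm (Q * Δ * U)) := by
          rw [frobNorm_transpose]
  have hfinal : frobNorm (Q * Δ * U) * (specNorm (Uᵀ * (X₀ + Δ) * U)⁻¹ * frobNorm (Q * Δ * U))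
      ≤ (frobNorm (Δ - Q * Δ * Q)) ^ 2 / (σ - e) := by
    set a := frobNorm (Q * Δ * U) with ha
    set t := frobNorm (Δ - Q * Δ * Q) with htd
    set m' := specNorm (Uᵀ * (X₀ + Δ) * U)⁻¹ with hm'
    have ha0 : 0 ≤ a := frobNorm_nonneg _
    have ht0 : 0 ≤ t := frobNorm_nonneg _
    have hm0 : 0 ≤ m' := specNorm_nonneg _
    have hrw : t ^ 2 / (σ - e) = t * ((σ - e)⁻¹ * t) := by
      rw [div_eq_mul_inv]; ring
    rw [hrw]
    have h1 : a * (m' * a) ≤ t * (m' * a) :=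
      mul_le_mul_of_nonneg_right hfa (mul_nonneg hm0 ha0)
    have h2 : t * (m' * a) ≤ t * ((σ - e)⁻¹ * a) :=
      mul_le_mul_of_nonneg_left (mul_le_mul_of_nonneg_right hinv ha0) ht0
    have h3 : t * ((σ - e)⁻¹ * a) ≤ t * ((σ - e)⁻¹ * t) :=
      mul_le_mul_of_nonneg_left
        (mul_le_mul_of_nonneg_left hfa (inv_nonneg.2 hse.le)) ht0
    linarith
  exact le_trans hstep hfinal
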